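/- Let c2 ∈ ℝ, let ρ : ℝ × ℝ³ → ℝ be nowhere vanishing, let w : ℝ × ℝ³ → ℝ³ be any map, and let u1, u2, u3 : ℝ × ℝ³ → ℝ³ be differentiable maps. Suppose that at every point (t,x) and for every i ∈ {1,2,3} the transport equation ρ(t,x) (∂_t u_i(t,x) + c2 (u1(t,x) · ∇_x) u_i(t,x)) + w(t,x) × u_i(t,x) = 0 holds, where × is the cross product in ℝ³. Then for all i, j ∈ {1,2,3} the scalar function g_{ij}(t,x) = u_i(t,x) · u_j(t,x) satisfies the transport equation ∂_t g_{ij}(t,x) + c2 u1(t,x) · ∇_x g_{ij}(t,x) = 0 at every point (t,x). -/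

import Mathlib

open Matrix

lemma fderiv_coord (h : ℝ × (Fin 3 → ℝ) → Fin 3 → ℝ) (k : Fin 3)
    (hh : Differentiable ℝ h) (p v : ℝ × (Fin 3 → ℝ)) :
    fderiv ℝ (fun q => h q k) p v = fderiv ℝ h p v k := by
  rw [show (fun q => h q k) = (ContinuousLinearMap.proj k : (Fin 3 → ℝ) →L[ℝ] ℝ) ∘ h from rfl,
    fderiv_comp p ((ContinuousLinearMap.proj k).differentiableAt) (hh p)]
  simp

lemma fderiv_dot (f g : ℝ × (Fin 3 → ℝ) → Fin 3 → ℝ) (hf : Differentiable ℝ f)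
    (hg : Differentiable ℝ g) (p v : ℝ × (Fin 3 → ℝ)) :
    fderiv ℝ (fun q => f q ⬝ᵥ g q) p v
      = fderiv ℝ f p v ⬝ᵥ g p + f p ⬝ᵥ fderiv ℝ g p v := by
  have dcoord : ∀ (h : ℝ × (Fin 3 → ℝ) → Fin 3 → ℝ), Differentiable ℝ h →
      ∀ k : Fin 3, Differentiable ℝ (fun q => h q k) := fun h hh k =>
    ((ContinuousLinearMap.proj k : (Fin 3 → ℝ) →L[ℝ] ℝ).differentiable).comp hh
  simp only [dotProduct]
  rw [fderiv_fun_sum (A := fun k q => f q k * g q k) (fun k _ => ((dcoord f hf k).mul (dcoord g hg k)) p)]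
  simp only [ContinuousLinearMap.coe_sum', Finset.sum_apply]
  rw [← Finset.sum_add_distrib]
  refine Finset.sum_congr rfl fun k _ => ?_
  rw [fderiv_fun_mul ((dcoord f hf k) p) ((dcoord g hg k) p)]
  simp only [fderiv_coord f k hf p v, fderiv_coord g k hg p v, ContinuousLinearMap.add_apply,
    ContinuousLinearMap.smul_apply, smul_eq_mul]
  ring

lemma cross_dot_antisymm (w a b : Fin 3 → ℝ) :
    crossProduct w a ⬝ᵥ b + a ⬝ᵥ crossProduct w b = 0 := by
  simp [crossProduct, dotProduct, Fin.sum_univ_three]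
  ring

/-- if each column field `u_i : ℝ × ℝ³ → ℝ³` satisfies the transport
equation `ρ (∂_t u_i + c2 (u1·∇_x) u_i) + w × u_i = 0` with `ρ` nowhere vanishing,
then every inner product `g_{ij} = u_i · u_j` satisfies the scalar transport equation
`∂_t g_{ij} + c2 u1 · ∇_x g_{ij} = 0`.  Here the time/directional derivatives are
expressed through the Fréchet derivative on `ℝ × (Fin 3 → ℝ)`. -/
theorem statement6 (c2 : ℝ)
    (ρ : ℝ × (Fin 3 → ℝ) → ℝ) (hρ : ∀ p, ρ p ≠ 0)
    (w : ℝ × (Fin 3 → ℝ) → Fin 3 → ℝ)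
    (u : Fin 3 → ℝ × (Fin 3 → ℝ) → Fin 3 → ℝ)
    (hu : ∀ i, Differentiable ℝ (u i))
    (heq : ∀ (i : Fin 3) (p : ℝ × (Fin 3 → ℝ)),
      ρ p • (fderiv ℝ (u i) p (1, 0) + c2 • fderiv ℝ (u i) p (0, u 0 p))
        + crossProduct (w p) (u i p) = 0) :
    ∀ (i j : Fin 3) (p : ℝ × (Fin 3 → ℝ)),
      fderiv ℝ (fun q => u i q ⬝ᵥ u j q) p (1, 0)
        + c2 * fderiv ℝ (fun q => u i q ⬝ᵥ u j q) p (0, u 0 p) = 0 := by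
  intro i j p
  have key : ∀ k : Fin 3,
      fderiv ℝ (u k) p (1, 0) + c2 • fderiv ℝ (u k) p (0, u 0 p)
        = (-(ρ p)⁻¹) • crossProduct (w p) (u k p) := by
    intro k
    have h := heq k p
    have h2 : ρ p • (fderiv ℝ (u k) p (1, 0) + c2 • fderiv ℝ (u k) p (0, u 0 p))
        = -crossProduct (w p) (u k p) := by
      rw [eq_neg_iff_add_eq_zero]; exact h
    have h3 := congrArg (fun z => (ρ p)⁻¹ • z) h2
    simp only [smul_smul, inv_mul_cancel₀ (hρ p), one_smul] at h3
    rw [h3, smul_neg, ← neg_smul]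
  rw [fderiv_dot (u i) (u j) (hu i) (hu j) p (1, 0),
    fderiv_dot (u i) (u j) (hu i) (hu j) p (0, u 0 p)]
  have expand : fderiv ℝ (u i) p (1, 0) ⬝ᵥ u j p + u i p ⬝ᵥ fderiv ℝ (u j) p (1, 0)
      + c2 * (fderiv ℝ (u i) p (0, u 0 p) ⬝ᵥ u j p + u i p ⬝ᵥ fderiv ℝ (u j) p (0, u 0 p))
      = (fderiv ℝ (u i) p (1, 0) + c2 • fderiv ℝ (u i) p (0, u 0 p)) ⬝ᵥ u j p
        + u i p ⬝ᵥ (fderiv ℝ (u j) p (1, 0) + c2 • fderiv ℝ (u j) p (0, u 0 p)) := by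
    simp [add_dotProduct, dotProduct_add, smul_dotProduct, dotProduct_smul, smul_eq_mul]
    ring
  rw [expand, key i, key j, smul_dotProduct, dotProduct_smul, ← smul_add,
    cross_dot_antisymm (w p) (u i p) (u j p), smul_zero]
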